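/- For every integer n ≥ 1 and every subset S ⊆ {1,…,n} of odd cardinality, the linear form Σ_{i∈S} t_i divides the polynomial P_n in F_2[t_1,…,t_n]. -/

import Mathlib

open MvPolynomial

section DigitSum

/-- Binary digit sum. -/
private def DS (n : ℕ) : ℕ := (Nat.digits 2 n).sum

private lemma DS_rec {n : ℕ} (h : n ≠ 0) : DS n = n % 2 + DS (n / 2) := by
  unfold DS
  rw [Nat.digits_def' (by norm_num : 1 < 2) (Nat.pos_of_ne_zero h)]
  simp

private lemma DS_zero : DS 0 = 0 := by simp [DS]

private lemma DS_two_mul (n : ℕ) : DS (2 * n) = DS n := by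
  rcases Nat.eq_zero_or_pos n with rfl | h
  · simp
  · have h1 : 2 * n % 2 = 0 := by omega
    have h2 : 2 * n / 2 = n := by omega
    rw [DS_rec (by omega), h1, h2, Nat.zero_add]

private lemma DS_two_mul_add_one (n : ℕ) : DS (2 * n + 1) = DS n + 1 := by
  have h1 : (2 * n + 1) % 2 = 1 := by omega
  have h2 : (2 * n + 1) / 2 = n := by omega
  rw [DS_rec (by omega), h1, h2, Nat.add_comm]

private lemma DS_succ_le (n : ℕ) : DS (n + 1) ≤ DS n + 1 := by
  induction n using Nat.strong_induction_on with
  | _ n ih =>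
    obtain ⟨m, rfl | rfl⟩ := Nat.even_or_odd' n
    · rw [DS_two_mul_add_one, DS_two_mul]
    · have h : 2 * m + 1 + 1 = 2 * (m + 1) := by ring
      rw [h, DS_two_mul, DS_two_mul_add_one]
      have := ih m (by omega)
      omega

private lemma DS_add_pow_le (d a : ℕ) : DS (a + 2 ^ d) ≤ DS a + 1 := by
  induction d generalizing a with
  | zero => simpa using DS_succ_le a
  | succ d ih =>
    obtain ⟨m, rfl | rfl⟩ := Nat.even_or_odd' a
    · have h : 2 * m + 2 ^ (d + 1) = 2 * (m + 2 ^ d) := by ring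
      rw [h, DS_two_mul, DS_two_mul]
      exact ih m
    · have h : 2 * m + 1 + 2 ^ (d + 1) = 2 * (m + 2 ^ d) + 1 := by ring
      rw [h, DS_two_mul_add_one, DS_two_mul_add_one]
      have := ih m
      omega

private lemma DS_le_card {ι : Type*} [DecidableEq ι] (s : Finset ι) (d : ι → ℕ) :
    DS (∑ i ∈ s, 2 ^ d i) ≤ s.card := by
  induction s using Finset.induction_on with
  | empty => simp [DS_zero]
  | insert a s h ih =>
    rw [Finset.sum_insert h, Finset.card_insert_of_notMem h, Nat.add_comm (2 ^ d a)]
    have h1 := DS_add_pow_le (d a) (∑ i ∈ s, 2 ^ d i)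
    omega

private lemma DS_pow_sub_one (N : ℕ) : DS (2 ^ N - 1) = N := by
  induction N with
  | zero => simp [DS_zero]
  | succ N ih =>
    have hp : 0 < 2 ^ N := Nat.pow_pos (by norm_num)
    have h2 : (2 : ℕ) ^ (N + 1) = 2 * 2 ^ N := by ring
    have h : 2 ^ (N + 1) - 1 = 2 * (2 ^ N - 1) + 1 := by omega
    rw [h, DS_two_mul_add_one, ih]

/-- If `2^N` is a sum of at most `N` powers of two, then every exponent is positive. -/
private lemma lemZ {ι : Type*} [DecidableEq ι] {s : Finset ι} {d : ι → ℕ} {N : ℕ}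
    (h : ∑ i ∈ s, 2 ^ d i = 2 ^ N) (hc : s.card ≤ N) {k : ι} (hk : k ∈ s) : 1 ≤ d k := by
  by_contra hdk
  have hdk0 : d k = 0 := by omega
  have h1 := Finset.add_sum_erase s (fun i => 2 ^ d i) hk
  rw [h] at h1
  beta_reduce at h1
  rw [hdk0, pow_zero] at h1
  have hp : 0 < 2 ^ N := Nat.pow_pos (by norm_num)
  have h2 : ∑ i ∈ s.erase k, 2 ^ d i = 2 ^ N - 1 := by omega
  have h3 := DS_le_card (s.erase k) d
  rw [h2, DS_pow_sub_one] at h3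
  have h4 : (s.erase k).card = s.card - 1 := Finset.card_erase_of_mem hk
  have h5 : 1 ≤ s.card := Finset.card_pos.mpr ⟨k, hk⟩
  omega

end DigitSum

section Dvd

private lemma dvd_sub_aeval {n : ℕ} (j : Fin n) (g : MvPolynomial (Fin n) (ZMod 2))
    (p : MvPolynomial (Fin n) (ZMod 2)) :
    (X j - g) ∣ p - aeval (fun i => if i = j then g else X i) p := by
  induction p using MvPolynomial.induction_on with
  | C a => simp [algebraMap_eq]
  | add p q hp hq =>
    have h : p + q - aeval (fun i => if i = j then g else X i) (p + q) =
        (p - aeval (fun i => if i = j then g else X i) p) +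
          (q - aeval (fun i => if i = j then g else X i) q) := by
      rw [map_add]; ring
    rw [h]
    exact dvd_add hp hq
  | mul_X p i hp =>
    rw [map_mul, aeval_X]
    by_cases hij : i = j
    · subst hij
      rw [if_pos rfl]
      have h : p * X i - aeval (fun i' => if i' = i then g else X i') p * g =
          (p - aeval (fun i' => if i' = i then g else X i') p) * X i +
            aeval (fun i' => if i' = i then g else X i') p * (X i - g) := by ring
      rw [h]
      exact dvd_add (hp.mul_right _) (dvd_mul_left _ _)
    · rw [if_neg hij]
      have h : p * X i - aeval (fun i' => if i' = j then g else X i') p * X i =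
          (p - aeval (fun i' => if i' = j then g else X i') p) * X i := by ring
      rw [h]
      exact hp.mul_right _

end Dvd

/-- `P n` is the sum, over all `n`-tuples `(e 1, …, e n)` of nonnegative integers with
`2^(e 1) + ⋯ + 2^(e n) = 2^(n-1)`, of the monomials `t 1^(2^(e 1)) ⋯ t n^(2^(e n))`
in `F₂[t 1, …, t n]`. -/
noncomputable def P (n : ℕ) : MvPolynomial (Fin n) (ZMod 2) :=
  ∑ᶠ e : Fin n → ℕ,
    if (∑ i, 2 ^ e i) = 2 ^ (n - 1) then ∏ i, X i ^ 2 ^ e i else 0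

/-- For every subset `S ⊆ {1,…,n}` of odd cardinality, the linear form `∑_{i ∈ S} t i`
divides `P n` in `F₂[t 1, …, t n]`. -/
theorem stmt_1 (n : ℕ) (hn : 1 ≤ n) (S : Finset (Fin n)) (hS : Odd S.card) :
    (∑ i ∈ S, (X i : MvPolynomial (Fin n) (ZMod 2))) ∣ P n := by
  classical
  obtain ⟨j₀, hj₀⟩ := Finset.card_pos.mp hS.pos
  set S' : Finset (Fin n) := S.erase j₀ with hS'def
  set g : MvPolynomial (Fin n) (ZMod 2) := ∑ i ∈ S', X i with hgdef
  set f : Fin n → MvPolynomial (Fin n) (ZMod 2) := fun i => if i = j₀ then g else X i with hfdef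
  -- the linear form is `X j₀ - g`
  have hsum : (∑ i ∈ S, (X i : MvPolynomial (Fin n) (ZMod 2))) = X j₀ - g := by
    rw [CharTwo.sub_eq_add, hgdef, Finset.add_sum_erase _ _ hj₀]
  rw [hsum]
  -- the finite set of exponent tuples
  set T : Finset (Fin n → ℕ) := Fintype.piFinset fun _ => Finset.range n with hTdef
  set E : Finset (Fin n → ℕ) := T.filter fun e => (∑ i, 2 ^ e i) = 2 ^ (n - 1) with hEdef
  -- `P n` as a finite sum
  have hPT : P n = ∑ e ∈ E, ∏ i, (X i : MvPolynomial (Fin n) (ZMod 2)) ^ 2 ^ e i := by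
    rw [P, hEdef, Finset.sum_filter]
    apply finsum_eq_sum_of_support_subset
    intro e he
    simp only [Function.mem_support] at he
    have hcond : (∑ i, 2 ^ e i) = 2 ^ (n - 1) := by
      by_contra hc
      rw [if_neg hc] at he
      exact he rfl
    simp only [Finset.coe_sort_coe, hTdef, Finset.mem_coe, Fintype.mem_piFinset,
      Finset.mem_range]
    intro i
    have h1 : 2 ^ e i ≤ 2 ^ (n - 1) := by
      rw [← hcond]
      exact Finset.single_le_sum (f := fun i => 2 ^ e i) (fun j _ => Nat.zero_le _) (Finset.mem_univ i)
    have h2 : e i ≤ n - 1 := (Nat.pow_le_pow_iff_right (by norm_num)).mp h1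
    omega
  -- key bounded-exponent facts for members of `E`
  have hEmem : ∀ e ∈ E, (∀ i, e i < n) ∧ (∑ i, 2 ^ e i) = 2 ^ (n - 1) := by
    intro e he
    rw [hEdef, Finset.mem_filter, hTdef] at he
    obtain ⟨hT, hc⟩ := he
    simp only [Fintype.mem_piFinset, Finset.mem_range] at hT
    exact ⟨hT, hc⟩
  -- the product over indices other than `j₀`
  set A : (Fin n → ℕ) → MvPolynomial (Fin n) (ZMod 2) :=
    fun e => ∏ i ∈ Finset.univ.erase j₀, (X i : MvPolynomial (Fin n) (ZMod 2)) ^ 2 ^ e i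
    with hAdef
  -- applying the substitution
  have hterm : ∀ e : Fin n → ℕ,
      (∏ i, f i ^ 2 ^ e i) = ∑ k ∈ S', (X k : MvPolynomial (Fin n) (ZMod 2)) ^ 2 ^ e j₀ * A e := by
    intro e
    rw [← Finset.mul_prod_erase Finset.univ _ (Finset.mem_univ j₀)]
    have h1 : (∏ i ∈ Finset.univ.erase j₀, f i ^ 2 ^ e i) = A e := by
      refine Finset.prod_congr rfl fun i hi => ?_
      rw [hfdef]
      simp only
      rw [if_neg (Finset.ne_of_mem_erase hi)]
    have h2 : f j₀ = g := by simp [hfdef]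
    rw [h1, h2, hgdef, sum_pow_char_pow 2 (e j₀) S' X, Finset.sum_mul]
  have hφP : aeval f (P n) = ∑ k ∈ S', ∑ e ∈ E,
      (X k : MvPolynomial (Fin n) (ZMod 2)) ^ 2 ^ e j₀ * A e := by
    rw [hPT, map_sum, ← Finset.sum_comm]
    refine Finset.sum_congr rfl fun e _ => ?_
    rw [map_prod]
    simp only [map_pow, aeval_X]
    exact hterm e
  -- the common value of the `e k = e j₀` part
  set B : Finset (Fin n → ℕ) := T.filter fun d =>
    (∑ i ∈ Finset.univ.erase j₀, 2 ^ d i) = 2 ^ (n - 1) ∧ d j₀ = 0 with hBdef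
  set C : MvPolynomial (Fin n) (ZMod 2) := ∑ d ∈ B, A d with hCdef
  have hcard_erase : (Finset.univ.erase j₀ : Finset (Fin n)).card = n - 1 := by
    rw [Finset.card_erase_of_mem (Finset.mem_univ j₀), Finset.card_univ, Fintype.card_fin]
  -- every `d ∈ B` has positive exponents away from `j₀`
  have hBpos : ∀ d ∈ B, ∀ i ∈ Finset.univ.erase j₀, 1 ≤ d i := by
    intro d hd i hi
    rw [hBdef, Finset.mem_filter] at hd
    exact lemZ hd.2.1 (le_of_eq hcard_erase) hi
  have hBmem : ∀ d ∈ B, (∀ i, d i < n) ∧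
      (∑ i ∈ Finset.univ.erase j₀, 2 ^ d i) = 2 ^ (n - 1) ∧ d j₀ = 0 := by
    intro d hd
    rw [hBdef, Finset.mem_filter, hTdef] at hd
    obtain ⟨hT, hc⟩ := hd
    simp only [Fintype.mem_piFinset, Finset.mem_range] at hT
    exact ⟨hT, hc⟩
  have hEmem2 : ∀ e : Fin n → ℕ, (∀ i, e i < n) → (∑ i, 2 ^ e i) = 2 ^ (n - 1) → e ∈ E := by
    intro e h1 h2
    simp only [hEdef, hTdef, Finset.mem_filter, Fintype.mem_piFinset, Finset.mem_range]
    exact ⟨h1, h2⟩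
  have hBmem2 : ∀ d : Fin n → ℕ, (∀ i, d i < n) →
      (∑ i ∈ Finset.univ.erase j₀, 2 ^ d i) = 2 ^ (n - 1) → d j₀ = 0 → d ∈ B := by
    intro d h1 h2 h3
    simp only [hBdef, hTdef, Finset.mem_filter, Fintype.mem_piFinset, Finset.mem_range]
    exact ⟨h1, h2, h3⟩
  -- main computation: each inner sum equals `C`
  have hinner : ∀ k ∈ S', (∑ e ∈ E,
      (X k : MvPolynomial (Fin n) (ZMod 2)) ^ 2 ^ e j₀ * A e) = C := by
    intro k hk
    have hkj : k ≠ j₀ := Finset.ne_of_mem_erase hk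
    have hkE : k ∈ Finset.univ.erase j₀ := Finset.mem_erase.mpr ⟨hkj, Finset.mem_univ k⟩
    -- split the term by factoring out the `k` factor of `A e`
    have hsplit : ∀ e : Fin n → ℕ,
        (X k : MvPolynomial (Fin n) (ZMod 2)) ^ 2 ^ e j₀ * A e =
          X k ^ 2 ^ e j₀ * (X k ^ 2 ^ e k *
            ∏ i ∈ (Finset.univ.erase j₀).erase k, (X i : MvPolynomial (Fin n) (ZMod 2)) ^ 2 ^ e i) := by
      intro e
      rw [hAdef]
      simp only
      rw [← Finset.mul_prod_erase _ _ hkE]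
    rw [← Finset.sum_filter_add_sum_filter_not E (fun e => e k = e j₀)]
    -- Part 1 : the `e k ≠ e j₀` part vanishes by the swap involution
    have hpart2 : (∑ e ∈ E.filter fun e => ¬e k = e j₀,
        (X k : MvPolynomial (Fin n) (ZMod 2)) ^ 2 ^ e j₀ * A e) = 0 := by
      refine Finset.sum_involution (fun e _ => e ∘ (Equiv.swap k j₀)) ?_ ?_ ?_ ?_
      · -- terms cancel in pairs
        intro e he
        have h1 : (X k : MvPolynomial (Fin n) (ZMod 2)) ^ 2 ^ (e ∘ (Equiv.swap k j₀)) j₀ *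
            A (e ∘ (Equiv.swap k j₀)) = X k ^ 2 ^ e j₀ * A e := by
          rw [hsplit, hsplit]
          have hj : (e ∘ (Equiv.swap k j₀)) j₀ = e k := by
            simp [Function.comp, Equiv.swap_apply_right]
          have hk' : (e ∘ (Equiv.swap k j₀)) k = e j₀ := by
            simp [Function.comp, Equiv.swap_apply_left]
          have hprod : (∏ i ∈ (Finset.univ.erase j₀).erase k,
              (X i : MvPolynomial (Fin n) (ZMod 2)) ^ 2 ^ (e ∘ (Equiv.swap k j₀)) i) =
              ∏ i ∈ (Finset.univ.erase j₀).erase k,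
                (X i : MvPolynomial (Fin n) (ZMod 2)) ^ 2 ^ e i := by
            refine Finset.prod_congr rfl fun i hi => ?_
            have hik : i ≠ k := Finset.ne_of_mem_erase hi
            have hij : i ≠ j₀ := Finset.ne_of_mem_erase (Finset.mem_of_mem_erase hi)
            rw [Function.comp_apply, Equiv.swap_apply_of_ne_of_ne hik hij]
          rw [hj, hk', hprod]
          ring
        rw [h1]
        exact CharTwo.add_self_eq_zero _
      · -- no relevant fixed points
        intro e he _
        rw [Finset.mem_filter] at he
        intro hfix
        have h := congrFun hfix k
        simp only [Function.comp_apply, Equiv.swap_apply_left] at h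
        exact he.2 h.symm
      · -- membership is preserved
        intro e he
        rw [Finset.mem_filter] at he
        obtain ⟨heE, hne⟩ := he
        obtain ⟨hbd, hc⟩ := hEmem e heE
        simp only [Finset.mem_filter, Function.comp_apply, Equiv.swap_apply_left, Equiv.swap_apply_right]
        refine ⟨hEmem2 _ (fun i => hbd _) ?_, fun h => hne h.symm⟩
        rw [← hc]
        exact Fintype.sum_equiv (Equiv.swap k j₀) _ _ fun i => rfl
      · -- involution
        intro e he
        funext i
        simp [Function.comp, Equiv.swap_apply_self]
    rw [hpart2, add_zero]
    -- Part 2 : the `e k = e j₀` part equals `C` via an explicit bijection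
    rw [hCdef]
    refine Finset.sum_nbij'
      (fun e => Function.update (Function.update e k (e k + 1)) j₀ 0)
      (fun d => Function.update (Function.update d k (d k - 1)) j₀ (d k - 1))
      ?_ ?_ ?_ ?_ ?_
    · -- forward map lands in `B`
      intro e he
      beta_reduce
      rw [Finset.mem_filter] at he
      obtain ⟨heE, heq⟩ := he
      obtain ⟨hbd, hc⟩ := hEmem e heE
      have hFk : Function.update (Function.update e k (e k + 1)) j₀ 0 k = e k + 1 := by
        rw [Function.update_of_ne hkj, Function.update_self]
      have hFj : Function.update (Function.update e k (e k + 1)) j₀ 0 j₀ = 0 :=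
        Function.update_self _ _ _
      have hFo : ∀ i, i ≠ k → i ≠ j₀ →
          Function.update (Function.update e k (e k + 1)) j₀ 0 i = e i := by
        intro i hik hij
        rw [Function.update_of_ne hij, Function.update_of_ne hik]
      -- bound on `e k + 1`
      have hbk : e k + 1 ≤ n - 1 := by
        have hpair : 2 ^ e k + 2 ^ e j₀ ≤ ∑ i, 2 ^ e i := by
          have hsub : ({k, j₀} : Finset (Fin n)) ⊆ Finset.univ := Finset.subset_univ _
          have h := Finset.sum_le_sum_of_subset (f := fun i => 2 ^ e i) hsub
          rwa [Finset.sum_pair hkj] at h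
        rw [hc, ← heq] at hpair
        have h2 : 2 ^ (e k + 1) ≤ 2 ^ (n - 1) := by
          have h3 : (2 : ℕ) ^ (e k + 1) = 2 ^ e k + 2 ^ e k := by rw [pow_succ]; ring
          omega
        exact (Nat.pow_le_pow_iff_right (by norm_num)).mp h2
      refine hBmem2 _ ?_ ?_ hFj
      · intro i
        by_cases hik : i = k
        · subst hik; rw [hFk]; omega
        · by_cases hij : i = j₀
          · subst hij; rw [hFj]; omega
          · rw [hFo i hik hij]; exact hbd i
      · -- sum condition
        have e1 : (∑ i ∈ Finset.univ.erase j₀,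
            2 ^ Function.update (Function.update e k (e k + 1)) j₀ 0 i) =
            2 ^ (e k + 1) + ∑ i ∈ (Finset.univ.erase j₀).erase k, 2 ^ e i := by
          rw [← Finset.add_sum_erase _
            (fun i => 2 ^ Function.update (Function.update e k (e k + 1)) j₀ 0 i) hkE, hFk]
          congr 1
          refine Finset.sum_congr rfl fun i hi => ?_
          have hik : i ≠ k := Finset.ne_of_mem_erase hi
          have hij : i ≠ j₀ := Finset.ne_of_mem_erase (Finset.mem_of_mem_erase hi)
          rw [hFo i hik hij]
        have e2 : (∑ i, 2 ^ e i) =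
            2 ^ e j₀ + (2 ^ e k + ∑ i ∈ (Finset.univ.erase j₀).erase k, 2 ^ e i) := by
          rw [← Finset.add_sum_erase _ (fun i => 2 ^ e i) (Finset.mem_univ j₀),
            ← Finset.add_sum_erase _ (fun i => 2 ^ e i) hkE]
        have e3 : (2 : ℕ) ^ (e k + 1) = 2 ^ e k + 2 ^ e k := by rw [pow_succ]; ring
        rw [e1, e3, heq]
        rw [e2, heq] at hc
        omega
    · -- reverse map lands in the filtered set
      intro d hd
      beta_reduce
      have hdpos : 1 ≤ d k := hBpos d hd k hkE
      obtain ⟨hbd, hc, hdj⟩ := hBmem d hd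
      have hGk : Function.update (Function.update d k (d k - 1)) j₀ (d k - 1) k = d k - 1 := by
        rw [Function.update_of_ne hkj, Function.update_self]
      have hGj : Function.update (Function.update d k (d k - 1)) j₀ (d k - 1) j₀ = d k - 1 :=
        Function.update_self _ _ _
      have hGo : ∀ i, i ≠ k → i ≠ j₀ →
          Function.update (Function.update d k (d k - 1)) j₀ (d k - 1) i = d i := by
        intro i hik hij
        rw [Function.update_of_ne hij, Function.update_of_ne hik]
      rw [Finset.mem_filter]
      refine ⟨hEmem2 _ ?_ ?_, by rw [hGk, hGj]⟩
      · intro i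
        by_cases hik : i = k
        · subst hik; rw [hGk]; have := hbd i; omega
        · by_cases hij : i = j₀
          · subst hij; rw [hGj]; have := hbd k; omega
          · rw [hGo i hik hij]; exact hbd i
      · have e1 : (∑ i, 2 ^ Function.update (Function.update d k (d k - 1)) j₀ (d k - 1) i) =
            2 ^ (d k - 1) + (2 ^ (d k - 1) +
              ∑ i ∈ (Finset.univ.erase j₀).erase k, 2 ^ d i) := by
          rw [← Finset.add_sum_erase _
              (fun i => 2 ^ Function.update (Function.update d k (d k - 1)) j₀ (d k - 1) i)
              (Finset.mem_univ j₀), hGj,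
            ← Finset.add_sum_erase _
              (fun i => 2 ^ Function.update (Function.update d k (d k - 1)) j₀ (d k - 1) i)
              hkE, hGk]
          congr 2
          refine Finset.sum_congr rfl fun i hi => ?_
          have hik : i ≠ k := Finset.ne_of_mem_erase hi
          have hij : i ≠ j₀ := Finset.ne_of_mem_erase (Finset.mem_of_mem_erase hi)
          rw [hGo i hik hij]
        have e2 : (∑ i ∈ Finset.univ.erase j₀, 2 ^ d i) =
            2 ^ d k + ∑ i ∈ (Finset.univ.erase j₀).erase k, 2 ^ d i := by
          rw [← Finset.add_sum_erase _ (fun i => 2 ^ d i) hkE]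
        have e3 : (2 : ℕ) ^ d k = 2 ^ (d k - 1) + 2 ^ (d k - 1) := by
          obtain ⟨m, hm⟩ : ∃ m, d k = m + 1 := ⟨d k - 1, by omega⟩
          rw [hm, Nat.add_sub_cancel, pow_succ]
          omega
        rw [e1]
        rw [e2, e3] at hc
        omega
    · -- left inverse
      intro e he
      beta_reduce
      rw [Finset.mem_filter] at he
      have heq := he.2
      funext i
      by_cases hik : i = k
      · subst hik
        rw [Function.update_of_ne hkj, Function.update_self, Function.update_of_ne hkj,
          Function.update_self]
        omega
      · by_cases hij : i = j₀
        · subst hij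
          rw [Function.update_self, Function.update_of_ne hkj, Function.update_self]
          omega
        · rw [Function.update_of_ne hij, Function.update_of_ne hik,
            Function.update_of_ne hij, Function.update_of_ne hik]
    · -- right inverse
      intro d hd
      beta_reduce
      have hdpos : 1 ≤ d k := hBpos d hd k hkE
      obtain ⟨_, _, hdj⟩ := hBmem d hd
      funext i
      by_cases hij : i = j₀
      · subst hij
        rw [Function.update_self, hdj]
      · by_cases hik : i = k
        · subst hik
          rw [Function.update_of_ne hkj, Function.update_self, Function.update_of_ne hkj,
            Function.update_self]
          omega
        · rw [Function.update_of_ne hij, Function.update_of_ne hik,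
            Function.update_of_ne hij, Function.update_of_ne hik]
    · -- terms agree
      intro e he
      beta_reduce
      rw [Finset.mem_filter] at he
      have heq := he.2
      rw [hsplit]
      have hFk : Function.update (Function.update e k (e k + 1)) j₀ 0 k = e k + 1 := by
        rw [Function.update_of_ne hkj, Function.update_self]
      rw [hAdef]
      beta_reduce
      rw [← Finset.mul_prod_erase _
        (fun i => (X i : MvPolynomial (Fin n) (ZMod 2)) ^
          2 ^ Function.update (Function.update e k (e k + 1)) j₀ 0 i) hkE, hFk]
      have hprod : (∏ i ∈ (Finset.univ.erase j₀).erase k,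
          (X i : MvPolynomial (Fin n) (ZMod 2)) ^
            2 ^ Function.update (Function.update e k (e k + 1)) j₀ 0 i) =
          ∏ i ∈ (Finset.univ.erase j₀).erase k,
            (X i : MvPolynomial (Fin n) (ZMod 2)) ^ 2 ^ e i := by
        refine Finset.prod_congr rfl fun i hi => ?_
        have hik : i ≠ k := Finset.ne_of_mem_erase hi
        have hij : i ≠ j₀ := Finset.ne_of_mem_erase (Finset.mem_of_mem_erase hi)
        rw [Function.update_of_ne hij, Function.update_of_ne hik]
      rw [hprod, heq, ← mul_assoc, ← pow_add]
      have e3 : 2 ^ e j₀ + 2 ^ e j₀ = 2 ^ (e j₀ + 1) := by rw [pow_succ]; ring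
      rw [e3]
  -- the substituted polynomial vanishes
  have hφ0 : aeval f (P n) = 0 := by
    rw [hφP, Finset.sum_congr rfl hinner, Finset.sum_const]
    obtain ⟨m, hm⟩ := hS
    have hc' : S'.card = m + m := by
      rw [hS'def, Finset.card_erase_of_mem hj₀]
      omega
    rw [hc', add_nsmul]
    exact CharTwo.add_self_eq_zero _
  -- conclude
  have hdvd := dvd_sub_aeval j₀ g (P n)
  rw [← hfdef, hφ0, sub_zero] at hdvd
  exact hdvd
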